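/- Let G be a group, n a natural number, π : FreeGroup (Fin n) →* G a surjective group homomorphism, and R a subset of ker π whose normal closure equals ker π. Let τ : Fin n → G → ℂ be such that for each i ∈ Fin n the set {a ∈ G : τ i a ≠ 0} is finite, and let T̃ be the π-twisted free extension of τ. Then the following are equivalent: (1) there exists a derivation X of ℂ[G] such that T^X(π(FreeGroup.of i), a) = τ i a for all i ∈ Fin n and a ∈ G; (2) T̃(r, a) = 0 for every r ∈ R and every a ∈ G. -/

import Mathlib

/-- Given a finite presentation `π : FreeGroup (Fin n) ↠ G` with relations `R`
(`R ⊆ ker π`, normal closure of `R` is `ker π`), and `τ : Fin n → G → ℂ` with each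
`τ i` finitely supported, the following are equivalent: (1) there is a derivation `X`
of `ℂ[G]` whose character satisfies `T^X(π(of i), a) = τ i a`; (2) the `π`-twisted
free extension `T̃` of `τ` vanishes on `R`. -/
theorem exists_derivation_iff_vanishes_on_relations {G : Type*} [Group G] (n : ℕ)
    (π : FreeGroup (Fin n) →* G) (hπ : Function.Surjective π)
    (R : Set (FreeGroup (Fin n))) (hR : R ⊆ (π.ker : Set (FreeGroup (Fin n))))
    (hRcl : Subgroup.normalClosure R = π.ker)
    (τ : Fin n → G → ℂ) (hτ : ∀ i : Fin n, {a : G | τ i a ≠ 0}.Finite)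
    (T' : FreeGroup (Fin n) → G → ℂ)
    (hT1 : ∀ (i : Fin n) (a : G), T' (FreeGroup.of i) a = τ i a)
    (hT2 : ∀ (w₁ w₂ : FreeGroup (Fin n)) (a : G),
      T' (w₂ * w₁) a = T' w₂ (π w₁ * a * (π w₁)⁻¹) + T' w₁ a) :
    (∃ X : MonoidAlgebra ℂ G →ₗ[ℂ] MonoidAlgebra ℂ G,
      (∀ u v : MonoidAlgebra ℂ G, X (u * v) = X u * v + u * X v) ∧
      (∀ (i : Fin n) (a : G),
        (X (MonoidAlgebra.single (π (FreeGroup.of i)) 1)).coeff (π (FreeGroup.of i) * a) = τ i a)) ↔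
    (∀ r ∈ R, ∀ a : G, T' r a = 0) := by
  classical
  have hpure : ∀ j : Fin n, (pure j : FreeGroup (Fin n)) = FreeGroup.of j := fun _ => rfl
  have hT'one : ∀ a : G, T' 1 a = 0 := by
    intro a
    have h := hT2 1 1 a
    simp only [mul_one, map_one, one_mul, inv_one] at h
    exact left_eq_add.mp h
  have hT'inv : ∀ (w : FreeGroup (Fin n)) (b : G),
      T' w⁻¹ b = -T' w ((π w)⁻¹ * b * π w) := by
    intro w b
    have h := hT2 w w⁻¹ ((π w)⁻¹ * b * π w)
    rw [inv_mul_cancel, hT'one] at h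
    have harg : π w * ((π w)⁻¹ * b * π w) * (π w)⁻¹ = b := by group
    rw [harg] at h
    exact eq_neg_of_add_eq_zero_left h.symm
  constructor
  · rintro ⟨X, hX, hchar⟩ r hrR a
    have hX1 : X 1 = 0 := by
      have h : X 1 = X 1 + X 1 := by simpa using hX 1 1
      exact (left_eq_add.mp h)
    have hσ1 : ∀ b : G, (X (MonoidAlgebra.single (1 : G) (1 : ℂ))).coeff b = 0 := by
      intro b
      rw [← MonoidAlgebra.one_def, hX1]
      rfl
    have hcocX : ∀ g h a : G,
        (X (MonoidAlgebra.single (g * h) (1 : ℂ))).coeff (g * h * a) =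
          (X (MonoidAlgebra.single g (1 : ℂ))).coeff (g * (h * a * h⁻¹)) +
            (X (MonoidAlgebra.single h (1 : ℂ))).coeff (h * a) := by
      intro g h a
      have hs : (MonoidAlgebra.single (g * h) (1 : ℂ)) =
          MonoidAlgebra.single g 1 * MonoidAlgebra.single h 1 := by
        rw [MonoidAlgebra.single_mul_single, one_mul]
      rw [hs, hX]
      rw [MonoidAlgebra.coeff_add, Finsupp.add_apply, MonoidAlgebra.coeff_mul_single_apply,
        MonoidAlgebra.coeff_single_mul_apply,
        mul_one, one_mul]
      congr 2 <;> group
    have main : ∀ w : FreeGroup (Fin n), ∀ a : G,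
        T' w a = (X (MonoidAlgebra.single (π w) (1 : ℂ))).coeff (π w * a) := by
      intro w
      induction w using FreeGroup.induction_on with
      | C1 =>
        intro a
        rw [hT'one, map_one, hσ1]
      | of i =>
        intro a
        rw [hT1]
        exact (hchar i a).symm
      | inv_of i ih =>
        intro a
        set g := π (FreeGroup.of i) with hg
        have h1 := hcocX g⁻¹ g (g⁻¹ * a * g)
        rw [inv_mul_cancel] at h1
        have h2 : g * (g⁻¹ * a * g) * g⁻¹ = a := by group
        rw [h2, one_mul] at h1
        rw [hσ1] at h1
        have h3 : (X (MonoidAlgebra.single g⁻¹ (1 : ℂ))).coeff (g⁻¹ * a) =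
            -(X (MonoidAlgebra.single g (1 : ℂ))).coeff (g * (g⁻¹ * a * g)) :=
          eq_neg_of_add_eq_zero_left h1.symm
        rw [hT'inv, ih, map_inv, ← hg, h3]
      | mul x y hx hy =>
        intro a
        rw [hT2 y x a, hx, hy, map_mul π x y, hcocX (π x) (π y) a]
    have hr1 : π r = 1 := hR hrR
    rw [main r a, hr1, hσ1]
  · intro hvanish
    -- T' vanishes on the kernel
    have hkerv : ∀ w ∈ π.ker, ∀ a : G, T' w a = 0 := by
      set K : Subgroup (FreeGroup (Fin n)) :=
        { carrier := {w | w ∈ π.ker ∧ ∀ a : G, T' w a = 0}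
          one_mem' := ⟨one_mem _, hT'one⟩
          mul_mem' := by
            rintro x y ⟨hx1, hx2⟩ ⟨hy1, hy2⟩
            exact ⟨mul_mem hx1 hy1, fun a => by rw [hT2 y x a, hx2, hy2, add_zero]⟩
          inv_mem' := by
            rintro x ⟨hx1, hx2⟩
            exact ⟨inv_mem hx1, fun a => by rw [hT'inv, hx2, neg_zero]⟩ } with hK
      have hnormal : K.Normal := by
        constructor
        rintro m ⟨hm1, hm2⟩ u
        have hπm : π m = 1 := hm1
        refine ⟨?_, fun a => ?_⟩
        · show π (u * m * u⁻¹) = 1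
          simp [hπm]
        · have h1 := hT2 (m * u⁻¹) u a
          rw [← mul_assoc] at h1
          have h2 := hT2 u⁻¹ m a
          rw [hm2, zero_add, hT'inv] at h2
          have harg2 : π (m * u⁻¹) * a * (π (m * u⁻¹))⁻¹ = (π u)⁻¹ * a * π u := by
            rw [map_mul, map_inv, hπm]; group
          rw [harg2, h2] at h1
          rw [h1, add_neg_cancel]
      haveI := hnormal
      have hle : Subgroup.normalClosure R ≤ K :=
        Subgroup.normalClosure_le_normal (fun r hr => ⟨hR hr, hvanish r hr⟩)
      rw [hRcl] at hle
      exact fun w hw => (hle hw).2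
    have hcongr : ∀ w w' : FreeGroup (Fin n), π w = π w' → ∀ a : G, T' w a = T' w' a := by
      intro w w' hww a
      have hmem : w' * w⁻¹ ∈ π.ker := by
        rw [MonoidHom.mem_ker, map_mul, map_inv, hww, mul_inv_cancel]
      have h := hT2 w (w' * w⁻¹) a
      rw [inv_mul_cancel_right] at h
      rw [h, hkerv _ hmem, zero_add]
    have hfinT : ∀ w : FreeGroup (Fin n), {a : G | T' w a ≠ 0}.Finite := by
      intro w
      induction w using FreeGroup.induction_on with
      | C1 =>
        have : {a : G | T' 1 a ≠ 0} = ∅ := by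
          ext a; simp [hT'one]
        rw [this]; exact Set.finite_empty
      | of i =>
        have : {a : G | T' (FreeGroup.of i) a ≠ 0} = {a : G | τ i a ≠ 0} := by
          ext a; simp [hT1]
        rw [this]; exact hτ i
      | inv_of i ih =>
        apply Set.Finite.subset
          (ih.image (fun b => π (FreeGroup.of i) * b * (π (FreeGroup.of i))⁻¹))
        intro a ha
        rw [Set.mem_setOf_eq, hT'inv] at ha
        refine ⟨(π (FreeGroup.of i))⁻¹ * a * π (FreeGroup.of i), ?_, by group⟩
        simpa using ha
      | mul x y hx hy =>
        apply Set.Finite.subset ((hx.image (fun b => (π y)⁻¹ * b * π y)).union hy)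
        intro a ha
        rw [Set.mem_setOf_eq, hT2 y x a] at ha
        by_cases h2 : T' y a = 0
        · left
          refine ⟨π y * a * (π y)⁻¹, ?_, by group⟩
          rw [h2, add_zero] at ha
          exact ha
        · right; exact h2
    -- define t on G
    set rep : G → FreeGroup (Fin n) := Function.surjInv hπ with hrep
    set t : G → G → ℂ := fun g a => T' (rep g) a with ht_def
    have ht : ∀ (w : FreeGroup (Fin n)) (a : G), t (π w) a = T' w a := by
      intro w a
      exact hcongr (rep (π w)) w (by rw [Function.surjInv_eq hπ]) a
    have hcoc : ∀ g h a : G, t (g * h) a = t g (h * a * h⁻¹) + t h a := by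
      intro g h a
      obtain ⟨w, rfl⟩ := hπ g
      obtain ⟨u, rfl⟩ := hπ h
      rw [← map_mul, ht, ht, ht]
      exact hT2 u w a
    have ht1 : ∀ a : G, t 1 a = 0 := by
      intro a
      have := ht 1 a
      rw [map_one] at this
      rw [this, hT'one]
    have hfint : ∀ g : G, {a : G | t g a ≠ 0}.Finite := fun g => hfinT (rep g)
    -- define D
    set D : G → MonoidAlgebra ℂ G := fun g =>
      (hfint g).toFinset.sum (fun a => MonoidAlgebra.single (g * a) (t g a)) with hD_def
    have hD : ∀ g x : G, (D g).coeff x = t g (g⁻¹ * x) := by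
      intro g x
      rw [hD_def]
      simp only
      rw [MonoidAlgebra.coeff_sum, Finset.sum_apply']
      have hterm : ∀ a : G, (MonoidAlgebra.single (g * a) (t g a) : MonoidAlgebra ℂ G).coeff x =
          if a = g⁻¹ * x then t g a else 0 := by
        intro a
        rw [MonoidAlgebra.coeff_single, Finsupp.single_apply]
        by_cases h : a = g⁻¹ * x
        · subst h
          simp [mul_inv_cancel_left]
        · rw [if_neg h, if_neg]
          intro hc
          exact h (by rw [← hc]; group)
      rw [Finset.sum_congr rfl (fun a _ => hterm a), Finset.sum_ite_eq']
      by_cases hmem : g⁻¹ * x ∈ (hfint g).toFinset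
      · rw [if_pos hmem]
      · rw [if_neg hmem]
        rw [Set.Finite.mem_toFinset, Set.mem_setOf_eq, not_not] at hmem
        exact hmem.symm
    set X : MonoidAlgebra ℂ G →ₗ[ℂ] MonoidAlgebra ℂ G :=
      Finsupp.lsum ℂ (fun g => LinearMap.toSpanSingleton ℂ (MonoidAlgebra ℂ G) (D g)) ∘ₗ
        (MonoidAlgebra.coeffLinearEquiv ℂ).toLinearMap with hXdef
    have hXsingle : ∀ (g : G) (c : ℂ), X (MonoidAlgebra.single g c) = c • D g := by
      intro g c
      rw [hXdef]
      exact Finsupp.lsum_single ℂ (fun g => LinearMap.toSpanSingleton ℂ (MonoidAlgebra ℂ G) (D g)) g c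
    have hLs : ∀ (g h : G) (c d : ℂ),
        X (MonoidAlgebra.single g c * MonoidAlgebra.single h d) =
          X (MonoidAlgebra.single g c) * MonoidAlgebra.single h d +
            MonoidAlgebra.single g c * X (MonoidAlgebra.single h d) := by
      intro g h c d
      rw [MonoidAlgebra.single_mul_single, hXsingle, hXsingle, hXsingle]
      apply MonoidAlgebra.coeff_injective
      ext x
      rw [MonoidAlgebra.coeff_add, Finsupp.add_apply, MonoidAlgebra.coeff_smul, Finsupp.smul_apply]
      have e1 : ((c • D g) * MonoidAlgebra.single h d).coeff x = (c • D g).coeff (x * h⁻¹) * d :=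
        MonoidAlgebra.coeff_mul_single_apply _ _ _ _
      have e2 : (MonoidAlgebra.single g c * (d • D h)).coeff x = c * (d • D h).coeff (g⁻¹ * x) :=
        MonoidAlgebra.coeff_single_mul_apply _ _ _ _
      rw [e1, e2, MonoidAlgebra.coeff_smul, MonoidAlgebra.coeff_smul, Finsupp.smul_apply, Finsupp.smul_apply, hD, hD, hD]
      have hcx : t (g * h) ((g * h)⁻¹ * x) =
          t g (g⁻¹ * (x * h⁻¹)) + t h (h⁻¹ * (g⁻¹ * x)) := by
        rw [hcoc g h ((g * h)⁻¹ * x)]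
        congr 2 <;> group
      rw [hcx]
      simp only [smul_eq_mul]
      ring
    have hLeib : ∀ u v : MonoidAlgebra ℂ G, X (u * v) = X u * v + u * X v := by
      intro u v
      induction u using MonoidAlgebra.induction_linear with
      | zero => simp
      | add f g hf hg =>
        rw [add_mul, map_add, hf, hg, map_add, add_mul, add_mul]
        abel
      | single g c =>
        induction v using MonoidAlgebra.induction_linear with
        | zero => simp
        | add f' g' hf' hg' =>
          rw [mul_add, map_add, hf', hg', map_add, mul_add, mul_add]
          abel
        | single h d => exact hLs g h c d
    refine ⟨X, hLeib, fun i a => ?_⟩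
    rw [hXsingle, one_smul, hD]
    have harg : (π (FreeGroup.of i))⁻¹ * (π (FreeGroup.of i) * a) = a := by group
    rw [harg, ht, hT1]
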